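/- Fix an integer d ≥ 13, a ∈ (0,1), and a constant L_∞ ≠ 0, and write t₀(b) := (a−1)·log b. Suppose that for each b > 0 there are a continuous function q_b : ℝ → ℝ and C² solutions γ_b, Φ_b, ρ_b : ℝ → ℝ of the linear equation γ''(t) + (d−4)γ'(t) + q_b(t)γ(t) = 0, satisfying: (i) there exist b-independent constants C★ > 0 and τ★ ∈ ℝ such that for all t ≤ τ★ and all b, |γ_b(t) − e^t| ≤ C★e^{3t}, |γ_b'(t) − e^t| ≤ C★e^{3t}, |Φ_b(t) − (2−d)^{-1}e^{(3−d)t}| ≤ C★e^{(5−d)t}, and |Φ_b'(t) − (3−d)(2−d)^{-1}e^{(3−d)t}| ≤ C★e^{(5−d)t}; (ii) γ_b(t)Φ_b'(t) − γ_b'(t)Φ_b(t) = e^{(4−d)t} for all t; (iii) ρ_b(t₀(b)) = L_∞ e^{κ₋ t₀(b)}(1 + η_b) and ρ_b'(t₀(b)) = L_∞ κ₋ e^{κ₋ t₀(b)}(1 + η̃_b), where η_b → 0 and η̃_b → 0 as b → ∞. Then there exists b₀ > 0 such that for every b > b₀, the infimum over t ∈ (−∞, t₀(b)] of |ρ_b(t)|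 is strictly positive; in particular ρ_b has no zeros on (−∞, t₀(b)], and the sign of ρ_b(t) there coincides with the sign of L_∞. -/

import Mathlib

open Filter Asymptotics Topology Set

/-- The characteristic exponent `κ₋ = (-(d-4) - √(d²-16d+40))/2`. -/
noncomputable def kappam (d : ℤ) : ℝ :=
  (-((d : ℝ) - 4) - Real.sqrt ((d : ℝ) ^ 2 - 16 * (d : ℝ) + 40)) / 2

lemma wronskian_const (c : ℝ) (q u v : ℝ → ℝ)
    (hu : ContDiff ℝ 2 u) (hv : ContDiff ℝ 2 v)
    (hueq : ∀ t, deriv (deriv u) t + c * deriv u t + q t * u t = 0)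
    (hveq : ∀ t, deriv (deriv v) t + c * deriv v t + q t * v t = 0)
    (x y : ℝ) :
    (u x * deriv v x - deriv u x * v x) * Real.exp (c * x)
      = (u y * deriv v y - deriv u y * v y) * Real.exp (c * y) := by
  have h2 : (2 : WithTop ℕ∞) = 1 + 1 := by norm_num
  have hu1 : Differentiable ℝ u := hu.differentiable (by norm_num)
  have hv1 : Differentiable ℝ v := hv.differentiable (by norm_num)
  have hu2 : Differentiable ℝ (deriv u) :=
    ((contDiff_succ_iff_deriv.mp (h2 ▸ hu)).2.2).differentiable (by norm_num)
  have hv2 : Differentiable ℝ (deriv v) :=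
    ((contDiff_succ_iff_deriv.mp (h2 ▸ hv)).2.2).differentiable (by norm_num)
  have H : ∀ t : ℝ, HasDerivAt (fun t => (u t * deriv v t - deriv u t * v t) * Real.exp (c * t))
      (((u t * deriv (deriv v) t + deriv u t * deriv v t)
        - (deriv u t * deriv v t + deriv (deriv u) t * v t)) * Real.exp (c * t)
        + (u t * deriv v t - deriv u t * v t) * (Real.exp (c * t) * c)) t := by
    intro t
    have h := ((((hu1 t).hasDerivAt.mul (hv2 t).hasDerivAt).sub
      (((hu2 t).hasDerivAt.mul (hv1 t).hasDerivAt))).mul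
      (((hasDerivAt_id t).const_mul c).exp))
    simp only [id_eq, Pi.sub_apply, Pi.mul_apply] at h
    exact h.congr_deriv (by ring)
  have hdiff : Differentiable ℝ (fun t => (u t * deriv v t - deriv u t * v t) * Real.exp (c * t)) :=
    fun t => (H t).differentiableAt
  have hzero : ∀ t, deriv (fun t => (u t * deriv v t - deriv u t * v t) * Real.exp (c * t)) t = 0 := by
    intro t
    rw [(H t).deriv]
    linear_combination (Real.exp (c*t) * u t) * hveq t - (Real.exp (c*t) * v t) * hueq t
  exact is_const_of_deriv_eq_zero hdiff hzero x y

set_option maxHeartbeats 3000000 in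
theorem stmt_7 (d : ℤ) (hd : 13 ≤ d) (a : ℝ) (ha : a ∈ Set.Ioo (0 : ℝ) 1)
    (LInf : ℝ) (hLInf : LInf ≠ 0)
    (q γ Φ ρ : ℝ → ℝ → ℝ) (η η' : ℝ → ℝ)
    (hq : ∀ b > (0 : ℝ), Continuous (q b))
    (hγC : ∀ b > (0 : ℝ), ContDiff ℝ 2 (γ b))
    (hΦC : ∀ b > (0 : ℝ), ContDiff ℝ 2 (Φ b))
    (hρC : ∀ b > (0 : ℝ), ContDiff ℝ 2 (ρ b))
    (hγeq : ∀ b > (0 : ℝ), ∀ t : ℝ,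
      deriv (deriv (γ b)) t + ((d : ℝ) - 4) * deriv (γ b) t + q b t * γ b t = 0)
    (hΦeq : ∀ b > (0 : ℝ), ∀ t : ℝ,
      deriv (deriv (Φ b)) t + ((d : ℝ) - 4) * deriv (Φ b) t + q b t * Φ b t = 0)
    (hρeq : ∀ b > (0 : ℝ), ∀ t : ℝ,
      deriv (deriv (ρ b)) t + ((d : ℝ) - 4) * deriv (ρ b) t + q b t * ρ b t = 0)
    (hCs : ∃ Cs > (0 : ℝ), ∃ τ : ℝ, ∀ b > (0 : ℝ), ∀ t ≤ τ,
      |γ b t - Real.exp t| ≤ Cs * Real.exp (3 * t) ∧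
      |deriv (γ b) t - Real.exp t| ≤ Cs * Real.exp (3 * t) ∧
      |Φ b t - (2 - (d : ℝ))⁻¹ * Real.exp ((3 - (d : ℝ)) * t)|
        ≤ Cs * Real.exp ((5 - (d : ℝ)) * t) ∧
      |deriv (Φ b) t - (3 - (d : ℝ)) * (2 - (d : ℝ))⁻¹ * Real.exp ((3 - (d : ℝ)) * t)|
        ≤ Cs * Real.exp ((5 - (d : ℝ)) * t))
    (hW : ∀ b > (0 : ℝ), ∀ t : ℝ,
      γ b t * deriv (Φ b) t - deriv (γ b) t * Φ b t = Real.exp ((4 - (d : ℝ)) * t))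
    (hρval : ∀ b > (0 : ℝ),
      ρ b ((a - 1) * Real.log b)
        = LInf * Real.exp (kappam d * ((a - 1) * Real.log b)) * (1 + η b) ∧
      deriv (ρ b) ((a - 1) * Real.log b)
        = LInf * kappam d * Real.exp (kappam d * ((a - 1) * Real.log b)) * (1 + η' b))
    (hηlim : Tendsto η atTop (𝓝 0)) (hη'lim : Tendsto η' atTop (𝓝 0)) :
    ∃ b₀ > (0 : ℝ), ∀ b > b₀,
      (∃ m > (0 : ℝ), ∀ t ≤ (a - 1) * Real.log b, m ≤ |ρ b t|) ∧
      (∀ t ≤ (a - 1) * Real.log b, ρ b t ≠ 0 ∧ Real.sign (ρ b t) = Real.sign LInf) := by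
  obtain ⟨C, hCpos, τs, hEst⟩ := hCs
  have ha1 : a - 1 < 0 := by linarith [ha.2]
  have hd13 : (13:ℝ) ≤ (d:ℝ) := by exact_mod_cast hd
  have hd2 : (2:ℝ) < (d:ℝ) := by linarith
  set κ := kappam d with hκdef
  have hκ_eq : κ = (-((d:ℝ)-4) - Real.sqrt ((d:ℝ)^2 - 16*(d:ℝ)+40))/2 := by
    rw [hκdef, kappam]
  clear_value κ
  have hsq : (Real.sqrt ((d:ℝ)^2 - 16*(d:ℝ) + 40))^2 = (d:ℝ)^2 - 16*(d:ℝ) + 40 :=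
    Real.sq_sqrt (by nlinarith only [hd13])
  have hs0 : 0 ≤ Real.sqrt ((d:ℝ)^2 - 16*(d:ℝ) + 40) := Real.sqrt_nonneg _
  have hκneg : κ < 0 := by rw [hκ_eq]; nlinarith only [hs0, hd13]
  have hκd3 : 0 < κ + (d:ℝ) - 3 := by rw [hκ_eq]; nlinarith only [hsq, hs0, hd13]
  have hκ1 : κ - 1 < 0 := by linarith
  set ι : ℝ := ((d:ℝ)-2)⁻¹ with hιdef
  have hιpos : 0 < ι := by rw [hιdef]; exact inv_pos.mpr (by linarith)
  have hιmul : ι * ((d:ℝ)-2) = 1 := by rw [hιdef]; exact inv_mul_cancel₀ (by linarith)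
  clear_value ι
  have hι11 : ι ≤ 1/11 := by nlinarith only [hιmul, hιpos, hd13, mul_le_mul_of_nonneg_left hd13 hιpos.le]
  set c₁ : ℝ := (κ + (d:ℝ) - 3) * ι with hc₁def
  clear_value c₁
  have hc₁pos : 0 < c₁ := by rw [hc₁def]; exact mul_pos hκd3 hιpos
  set M : ℝ := ((d:ℝ)-3-κ) * ι + (3/2)*(1-κ) with hMdef
  clear_value M
  have hMpos : 0 < M := by
    have h1 : 0 < ((d:ℝ)-3-κ) * ι := mul_pos (by linarith) hιpos
    nlinarith only [hMdef.le, hMdef.ge, h1, hκneg]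
  set ε : ℝ := min (ι/2) (c₁/M) with hεdef
  clear_value ε
  have hεpos : 0 < ε := by rw [hεdef]; exact lt_min (by linarith) (div_pos hc₁pos hMpos)
  have hει : ε ≤ ι/2 := by rw [hεdef]; exact min_le_left _ _
  have hεhalf : ε ≤ 1/2 := by linarith
  have hεM : ε * M ≤ c₁ := by
    have := min_le_right (ι/2) (c₁/M)
    calc ε * M ≤ (c₁/M) * M := by
          apply mul_le_mul_of_nonneg_right _ hMpos.le
          rw [hεdef]; exact this
      _ = c₁ := by field_simp
  -- eventual smallness
  have hτlim : Tendsto (fun x : ℝ => (a-1) * Real.log x) atTop atBot :=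
    Tendsto.const_mul_atTop_of_neg ha1 Real.tendsto_log_atTop
  have h2τlim : Tendsto (fun x : ℝ => 2*((a-1) * Real.log x)) atTop atBot := by
    apply Tendsto.const_mul_atBot (by norm_num : (0:ℝ) < 2) hτlim
  have hexplim : Tendsto (fun x : ℝ => C * Real.exp (2*((a-1)*Real.log x))) atTop (𝓝 0) := by
    have := (Real.tendsto_exp_atBot.comp h2τlim).const_mul C
    rw [mul_zero] at this
    exact this
  have ev1 : ∀ᶠ x : ℝ in atTop, (a-1)*Real.log x ≤ min τs 0 :=
    hτlim.eventually (eventually_le_atBot _)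
  have ev2 : ∀ᶠ x : ℝ in atTop, |η x| ≤ ε := by
    filter_upwards [Metric.tendsto_nhds.mp hηlim ε hεpos] with x hx
    rw [Real.dist_eq, sub_zero] at hx; exact hx.le
  have ev3 : ∀ᶠ x : ℝ in atTop, |η' x| ≤ ε := by
    filter_upwards [Metric.tendsto_nhds.mp hη'lim ε hεpos] with x hx
    rw [Real.dist_eq, sub_zero] at hx; exact hx.le
  have ev4 : ∀ᶠ x : ℝ in atTop, C * Real.exp (2*((a-1)*Real.log x)) ≤ ε := by
    filter_upwards [Metric.tendsto_nhds.mp hexplim ε hεpos] with x hx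
    rw [Real.dist_eq, sub_zero] at hx
    exact le_of_lt (lt_of_le_of_lt (le_abs_self _) hx)
  obtain ⟨N, hN⟩ := eventually_atTop.mp ((ev1.and (ev2.and (ev3.and ev4))))
  refine ⟨max N 1, lt_of_lt_of_le zero_lt_one (le_max_right _ _), ?_⟩
  intro b hb
  have hbN : N ≤ b := le_of_lt (lt_of_le_of_lt (le_max_left N 1) hb)
  have hb1 : (1:ℝ) < b := lt_of_le_of_lt (le_max_right N 1) hb
  have hb0 : (0:ℝ) < b := lt_trans zero_lt_one hb1
  obtain ⟨hcm, hcη, hcη', hcu⟩ := hN b hbN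
  have hv := hρval b hb0
  set T := (a - 1) * Real.log b with hTdef
  clear_value T
  have hcT : T ≤ τs := le_trans hcm (min_le_left _ _)
  have hcT0 : T ≤ 0 := le_trans hcm (min_le_right _ _)
  set u : ℝ := C * Real.exp (2*T) with hudef
  clear_value u
  have hu : u ≤ ε := hcu
  have hu0 : 0 ≤ u := by rw [hudef]; positivity
  -- the coefficients
  set A₀ : ℝ := (deriv (Φ b) T * (1 + η b) - κ * (Φ b T * (1 + η' b)))
      * (Real.exp (κ*T) * Real.exp (((d:ℝ)-4)*T)) with hA₀def
  set B₀ : ℝ := (κ * (γ b T * (1 + η' b)) - deriv (γ b) T * (1 + η b))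
      * (Real.exp (κ*T) * Real.exp (((d:ℝ)-4)*T)) with hB₀def
  -- representation
  have hrep : ∀ t : ℝ, ρ b t = LInf * (A₀ * γ b t + B₀ * Φ b t) := by
    intro t
    have h1 := wronskian_const ((d:ℝ)-4) (q b) (γ b) (ρ b) (hγC b hb0) (hρC b hb0)
      (hγeq b hb0) (hρeq b hb0) t T
    have h2 := wronskian_const ((d:ℝ)-4) (q b) (Φ b) (ρ b) (hΦC b hb0) (hρC b hb0)
      (hΦeq b hb0) (hρeq b hb0) t T
    have h3 := hW b hb0 t
    have hee : Real.exp ((4-(d:ℝ))*t) * Real.exp (((d:ℝ)-4)*t) = 1 := by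
      rw [← Real.exp_add, show (4-(d:ℝ))*t + ((d:ℝ)-4)*t = 0 by ring, Real.exp_zero]
    have hv1 := hv.1
    have hv2 := hv.2
    rw [hA₀def, hB₀def]
    linear_combination (-(ρ b t)) * hee + (-(ρ b t * Real.exp (((d:ℝ)-4)*t))) * h3
      + Φ b t * h1 - γ b t * h2
      + (Φ b t * γ b T * Real.exp (((d:ℝ)-4)*T)) * hv2
      - (Φ b t * deriv (γ b) T * Real.exp (((d:ℝ)-4)*T)) * hv1
      - (γ b t * Φ b T * Real.exp (((d:ℝ)-4)*T)) * hv2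
      + (γ b t * deriv (Φ b) T * Real.exp (((d:ℝ)-4)*T)) * hv1
  clear_value A₀ B₀
  -- estimates at T
  obtain ⟨hg1, hg2, hp1, hp2⟩ := hEst b hb0 T hcT
  have h2d : (2-(d:ℝ))⁻¹ = -ι := by
    rw [show (2-(d:ℝ)) = -((d:ℝ)-2) by ring, inv_neg, ← hιdef]
  rw [h2d] at hp1 hp2
  have hE5eq : C * Real.exp ((5-(d:ℝ))*T) = u * Real.exp ((3-(d:ℝ))*T) := by
    rw [hudef, show (5-(d:ℝ))*T = 2*T + (3-(d:ℝ))*T by ring, Real.exp_add]; ring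
  have hE3eq : C * Real.exp (3*T) = u * Real.exp T := by
    rw [hudef, show (3:ℝ)*T = 2*T + T by ring, Real.exp_add]; ring
  rw [hE5eq] at hp1 hp2
  rw [hE3eq] at hg1 hg2
  have hE3pos : 0 < Real.exp ((3-(d:ℝ))*T) := Real.exp_pos _
  have hETpos : 0 < Real.exp T := Real.exp_pos _
  have hp1' := abs_le.mp hp1
  have hp2' := abs_le.mp hp2
  have hg1' := abs_le.mp hg1
  have hg2' := abs_le.mp hg2
  have hηb := abs_le.mp hcη
  have hη'b := abs_le.mp hcη'
  have hε22 : ε ≤ 1/22 := by linarith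
  -- lower bound for Φ' at T, upper bound for Φ at T
  have SA1 : 0 ≤ deriv (Φ b) T := by
    nlinarith only [hp2'.1, mul_pos hιpos hE3pos,
      mul_le_mul_of_nonneg_right hu hE3pos.le,
      mul_le_mul_of_nonneg_right hει hE3pos.le,
      mul_le_mul_of_nonneg_right hd13 (mul_pos hιpos hE3pos).le]
  have SA2 : Φ b T ≤ -((ι/2) * Real.exp ((3-(d:ℝ))*T)) := by
    nlinarith only [hp1'.2, mul_le_mul_of_nonneg_right hu hE3pos.le,
      mul_le_mul_of_nonneg_right hει hE3pos.le]
  have hΦT0 : Φ b T ≤ 0 := le_trans SA2 (by nlinarith only [mul_pos hιpos hE3pos])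
  -- bracket A nonnegative
  have hAbr : 0 ≤ deriv (Φ b) T * (1 + η b) - κ * (Φ b T * (1 + η' b)) := by
    have e1 : ((d:ℝ)-3)*(ι*Real.exp ((3-(d:ℝ))*T)) - u*Real.exp ((3-(d:ℝ))*T)
        ≤ deriv (Φ b) T := by nlinarith only [hp2'.1]
    have e2 : deriv (Φ b) T * (1-ε) ≤ deriv (Φ b) T * (1 + η b) :=
      mul_le_mul_of_nonneg_left (by linarith [hηb.1]) SA1
    have e3 : (((d:ℝ)-3)*(ι*Real.exp ((3-(d:ℝ))*T)) - u*Real.exp ((3-(d:ℝ))*T)) * (1-ε)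
        ≤ deriv (Φ b) T * (1-ε) := mul_le_mul_of_nonneg_right e1 (by linarith)
    have e4 : Φ b T * (1+ε) ≤ Φ b T * (1 + η' b) :=
      mul_le_mul_of_nonpos_left (by linarith [hη'b.2]) hΦT0
    have e5 : (-(ι*Real.exp ((3-(d:ℝ))*T)) - u*Real.exp ((3-(d:ℝ))*T)) * (1+ε)
        ≤ Φ b T * (1+ε) :=
      mul_le_mul_of_nonneg_right (by nlinarith only [hp1'.1]) (by linarith)
    have e6 : κ * (Φ b T * (1 + η' b))
        ≤ κ * ((-(ι*Real.exp ((3-(d:ℝ))*T)) - u*Real.exp ((3-(d:ℝ))*T)) * (1+ε)) :=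
      mul_le_mul_of_nonpos_left (le_trans e5 e4) hκneg.le
    have hG : 0 ≤ (((d:ℝ)-3)*ι - u)*(1-ε) + κ*((ι+u)*(1+ε)) := by
      nlinarith only [hεM, hc₁def.le, hc₁def.ge, hMdef.le, hMdef.ge, hu, hu0, hεpos.le, hεhalf, hκneg.le, hιpos.le,
        mul_nonneg (sub_nonneg.2 hu) (neg_nonneg.2 hκneg.le),
        mul_nonneg hεpos.le (mul_nonneg (sub_nonneg.2 hu) (neg_nonneg.2 hκneg.le)),
        mul_nonneg (mul_nonneg (show (0:ℝ) ≤ 1/2-ε by linarith) (neg_nonneg.2 hκneg.le)) hεpos.le,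
        mul_nonneg (sub_nonneg.2 hu) (show (0:ℝ) ≤ 1-κ by linarith),
        mul_nonneg hεpos.le hu0]
    have hscal : 0 ≤ (((d:ℝ)-3)*(ι*Real.exp ((3-(d:ℝ))*T)) - u*Real.exp ((3-(d:ℝ))*T)) * (1-ε)
        - κ * ((-(ι*Real.exp ((3-(d:ℝ))*T)) - u*Real.exp ((3-(d:ℝ))*T)) * (1+ε)) := by
      nlinarith only [mul_nonneg hG hE3pos.le]
    linarith only [e2, e3, e6, hscal]
  -- bracket B bound
  have hBbr : κ * (γ b T * (1 + η' b)) - deriv (γ b) T * (1 + η b)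
      ≤ ((κ-1)/2) * Real.exp T := by
    have f1 : (1-ε)*Real.exp T ≤ γ b T := by
      nlinarith only [hg1'.1, mul_le_mul_of_nonneg_right hu hETpos.le]
    have f2 : (1-ε)*Real.exp T ≤ deriv (γ b) T := by
      nlinarith only [hg2'.1, mul_le_mul_of_nonneg_right hu hETpos.le]
    have f0 : 0 ≤ (1-ε)*Real.exp T := mul_nonneg (by linarith) hETpos.le
    have g1 : ((1-ε)*Real.exp T)*(1-ε) ≤ γ b T * (1+η' b) :=
      mul_le_mul f1 (by linarith [hη'b.1]) (by linarith) (le_trans f0 f1)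
    have g2 : κ*(γ b T*(1+η' b)) ≤ κ*(((1-ε)*Real.exp T)*(1-ε)) :=
      mul_le_mul_of_nonpos_left g1 hκneg.le
    have g3 : ((1-ε)*Real.exp T)*(1-ε) ≤ deriv (γ b) T * (1+η b) :=
      mul_le_mul f2 (by linarith [hηb.1]) (by linarith) (le_trans f0 f2)
    have hsq2 : (0:ℝ) ≤ (1-ε)^2 - 1/2 := by nlinarith only [hε22, hεpos.le]
    nlinarith only [g2, g3, hETpos, hκ1, hεpos.le, hε22,
      mul_nonneg (mul_nonneg (show (0:ℝ) ≤ 1-κ by linarith) hsq2) hETpos.le]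
  have hA : 0 ≤ A₀ := by
    rw [hA₀def]; exact mul_nonneg hAbr (by positivity)
  have hB : B₀ ≤ ((κ-1)/2) * (Real.exp T * (Real.exp (κ*T) * Real.exp (((d:ℝ)-4)*T))) := by
    have h0 : (0:ℝ) ≤ Real.exp (κ*T) * Real.exp (((d:ℝ)-4)*T) := by positivity
    have := mul_le_mul_of_nonneg_right hBbr h0
    rw [hB₀def]; nlinarith only [this]
  -- main pointwise estimate
  have hmain : ∀ t ≤ T, ((1-κ)*ι/4) * Real.exp (κ*T) ≤ A₀ * γ b t + B₀ * Φ b t := by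
    intro t ht
    obtain ⟨hg1t, hg2t, hp1t, hp2t⟩ := hEst b hb0 t (le_trans ht hcT)
    rw [h2d] at hp1t
    have hEtpos : 0 < Real.exp t := Real.exp_pos _
    have hE3tpos : 0 < Real.exp ((3-(d:ℝ))*t) := Real.exp_pos _
    have hC2t : C * Real.exp (2*t) ≤ ε := by
      have h1 : Real.exp (2*t) ≤ Real.exp (2*T) := Real.exp_le_exp.2 (by linarith)
      calc C * Real.exp (2*t) ≤ C * Real.exp (2*T) := mul_le_mul_of_nonneg_left h1 hCpos.le
        _ = u := hudef.symm
        _ ≤ ε := hu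
    have hC2t0 : 0 ≤ C * Real.exp (2*t) := by positivity
    have hCe3t : C * Real.exp (3*t) = (C * Real.exp (2*t)) * Real.exp t := by
      rw [show (3:ℝ)*t = 2*t + t by ring, Real.exp_add]; ring
    have hCe5t : C * Real.exp ((5-(d:ℝ))*t) = (C * Real.exp (2*t)) * Real.exp ((3-(d:ℝ))*t) := by
      rw [show (5-(d:ℝ))*t = 2*t + (3-(d:ℝ))*t by ring, Real.exp_add]; ring
    have hγt0 : 0 ≤ γ b t := by
      have h1 := (abs_le.mp hg1t).1
      rw [hCe3t] at h1
      nlinarith only [h1, hEtpos.le, mul_le_mul_of_nonneg_right hC2t hEtpos.le, mul_le_mul_of_nonneg_right hεhalf hEtpos.le]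
    have hΦtub : Φ b t ≤ -((ι/2) * Real.exp ((3-(d:ℝ))*t)) := by
      have h1 := (abs_le.mp hp1t).2
      rw [hCe5t] at h1
      nlinarith only [h1, mul_le_mul_of_nonneg_right hC2t hE3tpos.le,
        mul_le_mul_of_nonneg_right hει hE3tpos.le, mul_pos hιpos hE3tpos]
    have hp0 : 0 ≤ ((1-κ)/2) * (Real.exp T * (Real.exp (κ*T) * Real.exp (((d:ℝ)-4)*T))) :=
      mul_nonneg (by linarith) (by positivity)
    have hq0 : 0 ≤ (ι/2) * Real.exp ((3-(d:ℝ))*t) := by positivity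
    have hprod : ((1-κ)/2) * (Real.exp T * (Real.exp (κ*T) * Real.exp (((d:ℝ)-4)*T)))
        * ((ι/2) * Real.exp ((3-(d:ℝ))*t)) ≤ B₀ * Φ b t := by
      have hmm := mul_le_mul (show ((1-κ)/2) * (Real.exp T * (Real.exp (κ*T) * Real.exp (((d:ℝ)-4)*T))) ≤ -B₀ by linarith [hB])
        (show (ι/2) * Real.exp ((3-(d:ℝ))*t) ≤ -Φ b t by linarith [hΦtub]) hq0
        (le_trans hp0 (by linarith [hB]))
      nlinarith only [hmm]
    have hE : Real.exp T * (Real.exp (κ*T) * Real.exp (((d:ℝ)-4)*T)) * Real.exp ((3-(d:ℝ))*t)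
        = Real.exp (κ*T + ((d:ℝ)-3)*(T-t)) := by
      rw [← Real.exp_add, ← Real.exp_add, ← Real.exp_add]; congr 1; ring
    have hge : Real.exp (κ*T) ≤ Real.exp (κ*T + ((d:ℝ)-3)*(T-t)) :=
      Real.exp_le_exp.2 (by nlinarith only [mul_nonneg (show (0:ℝ) ≤ (d:ℝ)-3 by linarith) (sub_nonneg.2 ht)])
    have hexpcomb : ((1-κ)*ι/4) * Real.exp (κ*T)
        ≤ ((1-κ)/2) * (Real.exp T * (Real.exp (κ*T) * Real.exp (((d:ℝ)-4)*T)))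
          * ((ι/2) * Real.exp ((3-(d:ℝ))*t)) := by
      calc ((1-κ)*ι/4) * Real.exp (κ*T) ≤ ((1-κ)*ι/4) * Real.exp (κ*T + ((d:ℝ)-3)*(T-t)) := by
            apply mul_le_mul_of_nonneg_left hge
            nlinarith only [hιpos, hκneg, mul_pos hιpos (show (0:ℝ) < 1-κ by linarith)]
        _ = ((1-κ)/2) * (Real.exp T * (Real.exp (κ*T) * Real.exp (((d:ℝ)-4)*T)))
            * ((ι/2) * Real.exp ((3-(d:ℝ))*t)) := by rw [← hE]; ring
    have hA0γ : 0 ≤ A₀ * γ b t := mul_nonneg hA hγt0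
    linarith only [hprod, hexpcomb, hA0γ]
  have hm0 : 0 < ((1-κ)*ι/4) * Real.exp (κ*T) :=
    mul_pos (by nlinarith only [hιpos, hκneg, mul_pos hιpos (show (0:ℝ) < 1-κ by linarith)]) (Real.exp_pos _)
  constructor
  · refine ⟨|LInf| * (((1-κ)*ι/4) * Real.exp (κ*T)), mul_pos (abs_pos.2 hLInf) hm0, ?_⟩
    intro t ht
    rw [hrep t, abs_mul]
    exact mul_le_mul_of_nonneg_left (le_trans (hmain t ht) (le_abs_self _)) (abs_nonneg _)
  · intro t ht
    have hFpos : 0 < A₀ * γ b t + B₀ * Φ b t := lt_of_lt_of_le hm0 (hmain t ht)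
    rcases hLInf.lt_or_gt with hL | hL
    · have hρneg : ρ b t < 0 := by rw [hrep t]; exact mul_neg_of_neg_of_pos hL hFpos
      exact ⟨ne_of_lt hρneg, by rw [Real.sign_of_neg hρneg, Real.sign_of_neg hL]⟩
    · have hρpos : 0 < ρ b t := by rw [hrep t]; exact mul_pos hL hFpos
      exact ⟨ne_of_gt hρpos, by rw [Real.sign_of_pos hρpos, Real.sign_of_pos hL]⟩
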